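/- (Multivariate Raabe multiplication theorem, Bernoulli case) For every positive integer m, every natural number n, every positive integer k, every vector a = (a₁, …, a_k) of nonzero real numbers, and every real number x, m^{k-n} · B_n^{(k)}(m x | a) = Σ_{l₁=0}^{m-1} ⋯ Σ_{l_k=0}^{m-1} B_n^{(k)}( x + (1/m) Σ_{i=1}^{k} a_i l_i | a ). -/

import Mathlib

open PowerSeries

private lemma rescale_C' (c r : ℝ) : rescale c (C r) = C r := by
  ext n
  simp only [coeff_rescale, coeff_C]
  rcases eq_or_ne n 0 with h | h <;> simp [h]

private lemma rescale_exp_pow (c : ℝ) (l : ℕ) :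
    (rescale c (exp ℝ)) ^ l = rescale (l * c) (exp ℝ) := by
  induction l with
  | zero => simp [rescale_zero]
  | succ l ih =>
    rw [pow_succ, ih, exp_mul_exp_eq_exp_add]
    congr 1
    push_cast
    ring

private lemma rescale_exp_sum {ι : Type*} [DecidableEq ι] (s : Finset ι) (c : ι → ℝ) :
    rescale (∑ i ∈ s, c i) (exp ℝ) = ∏ i ∈ s, rescale (c i) (exp ℝ) := by
  induction s using Finset.induction with
  | empty => simp [rescale_zero]
  | insert _ _ h ih =>
    rw [Finset.sum_insert h, Finset.prod_insert h, ← ih, exp_mul_exp_eq_exp_add]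

theorem statement_17 (m : ℕ) (hm : 0 < m) (n k : ℕ) (hk : 0 < k)
    (a : Fin k → ℝ) (ha : ∀ j, a j ≠ 0) (x : ℝ) (B : ℝ → ℕ → ℝ)
    (hB : ∀ y : ℝ, (PowerSeries.mk fun i => B y i / (i.factorial : ℝ)) *
        (∏ j, (PowerSeries.rescale (a j) (PowerSeries.exp ℝ) - 1)) =
      PowerSeries.C (∏ j, a j) * PowerSeries.X ^ k *
        PowerSeries.rescale y (PowerSeries.exp ℝ)) :
    (m : ℝ) ^ ((k : ℤ) - (n : ℤ)) * B ((m : ℝ) * x) n =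
      ∑ l : Fin k → Fin m,
        B (x + (1 / (m : ℝ)) * ∑ i, a i * ((l i : ℕ) : ℝ)) n := by
  have hm0 : (m : ℝ) ≠ 0 := Nat.cast_ne_zero.mpr hm.ne'
  -- factorization: e^{a t} - 1 = (e^{at/m} - 1) * Σ_{l<m} e^{a l t/m}
  have hfac : ∀ j, rescale (a j) (exp ℝ) - 1 =
      (rescale (a j / m) (exp ℝ) - 1) *
        ∑ l : Fin m, rescale (a j * l / m) (exp ℝ) := by
    intro j
    have h1 : (∑ l : Fin m, rescale (a j * l / m) (exp ℝ)) =
        ∑ l ∈ Finset.range m, (rescale (a j / m) (exp ℝ)) ^ l := by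
      rw [Fin.sum_univ_eq_sum_range (fun l : ℕ => rescale (a j * l / m) (exp ℝ))]
      refine Finset.sum_congr rfl fun l _ => ?_
      rw [rescale_exp_pow]
      congr 1
      ring
    rw [h1, mul_comm, geom_sum_mul, rescale_exp_pow]
    congr 2
    field_simp
  -- sum of hB over all l : Fin k → Fin m
  have hsum : (∑ l : Fin k → Fin m,
        PowerSeries.mk fun i =>
          B (x + (1 / (m : ℝ)) * ∑ i, a i * ((l i : ℕ) : ℝ)) i / (i.factorial : ℝ)) *
      (∏ j, (rescale (a j) (exp ℝ) - 1)) =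
      C (∏ j, a j) * X ^ k * rescale x (exp ℝ) *
        ∏ j, ∑ l : Fin m, rescale (a j * l / m) (exp ℝ) := by
    rw [Finset.sum_mul, Finset.sum_congr rfl fun l _ => hB _, ← Finset.mul_sum]
    have hexp : (∑ l : Fin k → Fin m,
        rescale (x + (1 / (m : ℝ)) * ∑ i, a i * ((l i : ℕ) : ℝ)) (exp ℝ)) =
        rescale x (exp ℝ) * ∏ j, ∑ l : Fin m, rescale (a j * l / m) (exp ℝ) := by
      rw [Fintype.prod_sum fun j (l : Fin m) => rescale (a j * l / m) (exp ℝ),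
        Finset.mul_sum]
      refine Finset.sum_congr rfl fun l _ => ?_
      rw [← exp_mul_exp_eq_exp_add, Finset.mul_sum, rescale_exp_sum]
      congr 1
      refine Finset.prod_congr rfl fun i _ => ?_
      congr 1
      field_simp
    rw [hexp]
    ring
  -- rescaled version of hB (m x)
  have hres : (C ((m : ℝ) ^ k) * rescale (1 / (m : ℝ)) (PowerSeries.mk
        fun i => B ((m : ℝ) * x) i / (i.factorial : ℝ))) *
      (∏ j, (rescale (a j) (exp ℝ) - 1)) =
      C (∏ j, a j) * X ^ k * rescale x (exp ℝ) *
        ∏ j, ∑ l : Fin m, rescale (a j * l / m) (exp ℝ) := by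
    have h := congrArg (rescale (1 / (m : ℝ))) (hB ((m : ℝ) * x))
    rw [map_mul, map_prod, map_mul, map_mul, map_pow, rescale_C', rescale_X,
      rescale_rescale] at h
    simp only [map_sub, map_one, rescale_rescale] at h
    have h2 : ∀ j, a j * (1 / (m : ℝ)) = a j / m := fun j => by ring
    simp only [h2] at h
    calc (C ((m : ℝ) ^ k) * rescale (1 / (m : ℝ)) (PowerSeries.mk
            fun i => B ((m : ℝ) * x) i / (i.factorial : ℝ))) *
          (∏ j, (rescale (a j) (exp ℝ) - 1))
        = C ((m : ℝ) ^ k) * ((rescale (1 / (m : ℝ)) (PowerSeries.mk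
            fun i => B ((m : ℝ) * x) i / (i.factorial : ℝ))) *
          ∏ j, ((rescale (a j / m) (exp ℝ) - 1) *
            ∑ l : Fin m, rescale (a j * l / m) (exp ℝ))) := by
          rw [← Finset.prod_congr rfl fun j _ => hfac j]; ring
      _ = C ((m : ℝ) ^ k) * ((rescale (1 / (m : ℝ)) (PowerSeries.mk
            fun i => B ((m : ℝ) * x) i / (i.factorial : ℝ)) *
          ∏ j, (rescale (a j / m) (exp ℝ) - 1)) *
          ∏ j, ∑ l : Fin m, rescale (a j * l / m) (exp ℝ)) := by
          rw [Finset.prod_mul_distrib]; ring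
      _ = C ((m : ℝ) ^ k) * (C (∏ j, a j) * (C (1 / (m : ℝ)) * X) ^ k *
          rescale ((m : ℝ) * x * (1 / m)) (exp ℝ) *
          ∏ j, ∑ l : Fin m, rescale (a j * l / m) (exp ℝ)) := by rw [h]
      _ = C (∏ j, a j) * X ^ k * rescale x (exp ℝ) *
          ∏ j, ∑ l : Fin m, rescale (a j * l / m) (exp ℝ) := by
          have hx : (m : ℝ) * x * (1 / m) = x := by field_simp
          have hone : C ((m : ℝ) ^ k) * C ((1 / (m : ℝ)) ^ k) = 1 := by
            rw [← map_mul, ← mul_pow, mul_one_div, div_self hm0, one_pow, map_one]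
          rw [hx, mul_pow, ← map_pow]
          calc C ((m : ℝ) ^ k) * (C (∏ j, a j) * (C ((1 / (m : ℝ)) ^ k) * X ^ k) *
                rescale x (exp ℝ) * ∏ j, ∑ l : Fin m, rescale (a j * l / m) (exp ℝ))
              = (C ((m : ℝ) ^ k) * C ((1 / (m : ℝ)) ^ k)) * (C (∏ j, a j) * X ^ k *
                rescale x (exp ℝ) * ∏ j, ∑ l : Fin m, rescale (a j * l / m) (exp ℝ)) := by
                ring
            _ = _ := by rw [hone, one_mul]
  -- the product is nonzero, cancel
  have hprod_ne : (∏ j, (rescale (a j) (exp ℝ) - 1)) ≠ 0 := by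
    refine Finset.prod_ne_zero_iff.mpr fun j _ => ?_
    intro h0
    have := congrArg (coeff 1) h0
    simp [coeff_rescale, coeff_exp] at this
    exact ha j this
  have key := mul_right_cancel₀ hprod_ne (hres.trans hsum.symm)
  have hc := congrArg (coeff n) key
  simp only [map_mul, coeff_rescale, coeff_mk, map_sum, coeff_C_mul] at hc
  have hfact : (n.factorial : ℝ) ≠ 0 := Nat.cast_ne_zero.mpr n.factorial_ne_zero
  have hz : (m : ℝ) ^ ((k : ℤ) - (n : ℤ)) = (m : ℝ) ^ k * (1 / (m : ℝ)) ^ n := by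
    rw [zpow_sub₀ hm0, zpow_natCast, zpow_natCast]
    field_simp
    rw [← mul_pow, mul_one_div, div_self hm0, one_pow]
  rw [hz]
  have hc' := congrArg (fun r : ℝ => r * (n.factorial : ℝ)) hc
  simp only [Finset.sum_mul, div_mul_cancel₀ _ hfact] at hc'
  calc (m : ℝ) ^ k * (1 / (m : ℝ)) ^ n * B ((m : ℝ) * x) n
      = (m : ℝ) ^ k * ((1 / (m : ℝ)) ^ n * (B ((m : ℝ) * x) n / n.factorial)) * n.factorial := by
        field_simp
    _ = ∑ l : Fin k → Fin m,
          B (x + (1 / (m : ℝ)) * ∑ i, a i * ((l i : ℕ) : ℝ)) n := hc'
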